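/- Every nonempty subset of ℤⁿ has only finitely many minimal elements with respect to the conformal partial order ⊑, where x ⊑ y iff xᵢyᵢ ≥ 0 and |xᵢ| ≤ |yᵢ| for all i. -/

import Mathlib

/-- The conformal partial order on ℤⁿ. -/
def IsConformal {n : ℕ} (x y : Fin n → ℤ) : Prop :=
  ∀ i, x i * y i ≥ 0 ∧ |x i| ≤ |y i|

/-- Encoding of a vector in ℤⁿ as positive and negative parts in ℕ. -/
def confEnc {n : ℕ} (x : Fin n → ℤ) : Fin n × Bool → ℕ :=
  fun p => if p.2 then (x p.1).toNat else (-(x p.1)).toNat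

lemma confEnc_le_conformal {n : ℕ} (x y : Fin n → ℤ)
    (h : confEnc x ≤ confEnc y) : IsConformal x y := by
  intro i
  have h1 := h (i, true)
  have h2 := h (i, false)
  simp only [confEnc, if_true, Bool.false_eq_true, if_false] at h1 h2
  constructor
  · rcases lt_trichotomy (x i) 0 with hx | hx | hx
    · have hy : y i < 0 := by omega
      have := mul_pos_of_neg_of_neg hx hy
      linarith
    · simp [hx]
    · have hy : 0 < y i := by omega
      positivity
  · rw [Int.abs_eq_natAbs, Int.abs_eq_natAbs]
    omega

/-- Every nonempty subset of ℤⁿ has finitely many ⊑-minimal elements. -/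
theorem finitely_many_conformal_minimal (n : ℕ) (S : Set (Fin n → ℤ))
    (hS : S.Nonempty) :
    {x ∈ S | ∀ y ∈ S, IsConformal y x → y = x}.Finite := by
  by_contra hinf
  have hinf' : Set.Infinite {x ∈ S | ∀ y ∈ S, IsConformal y x → y = x} := hinf
  let e := hinf'.natEmbedding
  have hpwo : Set.IsPWO (Set.univ : Set (Fin n × Bool → ℕ)) := Set.isPWO_of_wellQuasiOrderedLE _
  obtain ⟨i, j, hij, hle⟩ := hpwo.exists_lt (f := fun k => confEnc (e k).1) (fun _ => Set.mem_univ _)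
  have hconf : IsConformal ((e i).1) ((e j).1) := confEnc_le_conformal _ _ hle
  have hi := (e i).2
  have hj := (e j).2
  have : (e i).1 = (e j).1 := hj.2 _ hi.1 hconf
  have : e i = e j := Subtype.ext this
  exact absurd (e.injective this) (by omega)
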